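/- (Lower bound on the differential entropy of a Gaussian mixture.) Let f_A(a) = Σ_{l=1}^L β_l f_l(a) be a mixture of complex Gaussian densities f_l with weights β_l ≥ 0, Σ β_l = 1. Then the differential entropy h(A) = −∫ f_A(a) log₂ f_A(a) da satisfies h(A) ≥ −Σ_{l=1}^L β_l log₂( Σ_{t=1}^L β_t z_{lt} ), where z_{lt} = ∫ f_l(a) f_t(a) da. -/

import Mathlib

open MeasureTheory Real

lemma gauss_integrable_cx {b : ℝ} (hb : 0 < b) :
    Integrable (fun a : ℂ => rexp (-b * ‖a‖ ^ 2)) := by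
  have h := (GaussianFourier.integrable_cexp_neg_mul_sq_norm_add
    (V := ℂ) (b := (b : ℂ)) (by simpa using hb) 0 0).norm
  refine h.congr (Filter.Eventually.of_forall fun a => ?_)
  simp [Complex.norm_exp, ← Complex.ofReal_pow]

lemma gauss_integral_cx {b : ℝ} (hb : 0 < b) :
    ∫ a : ℂ, rexp (-b * ‖a‖ ^ 2) = π / b := by
  rw [GaussianFourier.integral_rexp_neg_mul_sq_norm (V := ℂ) hb]
  norm_num [Complex.finrank_real_complex]

lemma gauss_sq_integrable_cx {b : ℝ} (hb : 0 < b) :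
    Integrable (fun a : ℂ => ‖a‖ ^ 2 * rexp (-b * ‖a‖ ^ 2)) := by
  refine ((gauss_integrable_cx (b := b / 2) (by linarith)).const_mul (2 / b)).mono'
    ?_ (Filter.Eventually.of_forall fun a => ?_)
  · exact (Continuous.mul (by continuity) (by continuity)).aestronglyMeasurable
  · have ht : ‖a‖ ^ 2 ≤ 2 / b * rexp (b / 2 * ‖a‖ ^ 2) := by
      have h2 : b / 2 * ‖a‖ ^ 2 ≤ rexp (b / 2 * ‖a‖ ^ 2) := by
        have := Real.add_one_le_exp (b / 2 * ‖a‖ ^ 2)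
        nlinarith [sq_nonneg ‖a‖]
      rw [div_mul_eq_mul_div, le_div_iff₀ hb]
      nlinarith [sq_nonneg ‖a‖]
    have hexp : rexp (-b * ‖a‖ ^ 2)
        = (rexp (b / 2 * ‖a‖ ^ 2))⁻¹ * rexp (-(b/2) * ‖a‖ ^ 2) := by
      rw [← Real.exp_neg, ← Real.exp_add]; ring_nf
    rw [Real.norm_eq_abs, abs_of_nonneg (by positivity)]
    calc ‖a‖ ^ 2 * rexp (-b * ‖a‖ ^ 2)
        ≤ (2 / b * rexp (b / 2 * ‖a‖ ^ 2)) *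
            ((rexp (b / 2 * ‖a‖ ^ 2))⁻¹ * rexp (-(b/2) * ‖a‖ ^ 2)) := by
          rw [← hexp]; exact mul_le_mul_of_nonneg_right ht (by positivity)
      _ = 2 / b * rexp (-(b / 2) * ‖a‖ ^ 2) := by
          rw [mul_assoc, ← mul_assoc (rexp _), mul_inv_cancel₀ (Real.exp_ne_zero _), one_mul]

/-- Jensen lower bound on the differential entropy of a complex Gaussian mixture. -/
theorem entropy_gaussian_mixture_lower_bound
    (L : ℕ) (hL : 0 < L) (β : Fin L → ℝ) (μ : Fin L → ℂ) (σ : Fin L → ℝ)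
    (hβ : ∀ l, 0 ≤ β l) (hβsum : ∑ l, β l = 1) (hσ : ∀ l, 0 < σ l)
    (f : Fin L → ℂ → ℝ)
    (hf : ∀ l a, f l a = (π * σ l)⁻¹ * Real.exp (-(‖a - μ l‖) ^ 2 / σ l))
    (fA : ℂ → ℝ) (hfA : ∀ a, fA a = ∑ l, β l * f l a) :
    (-∫ a : ℂ, fA a * Real.logb 2 (fA a)) ≥
      -∑ l, β l * Real.logb 2 (∑ t, β t * ∫ a : ℂ, f l a * f t a) := by
  have hπ : (0:ℝ) < π := pi_pos
  -- normal form for f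
  have hf' : ∀ l a, f l a = (π * σ l)⁻¹ * rexp (-(σ l)⁻¹ * ‖a - μ l‖ ^ 2) := by
    intro l a
    rw [hf l a]
    ring_nf
  have hfpos : ∀ l a, 0 < f l a := by
    intro l a; rw [hf' l a]
    have := (hσ l); positivity
  have hfle : ∀ l a, f l a ≤ (π * σ l)⁻¹ := by
    intro l a; rw [hf' l a]
    have h1 : rexp (-(σ l)⁻¹ * ‖a - μ l‖ ^ 2) ≤ 1 := by
      rw [Real.exp_le_one_iff, neg_mul, neg_nonpos]
      have := (hσ l); positivity
    calc (π * σ l)⁻¹ * rexp (-(σ l)⁻¹ * ‖a - μ l‖ ^ 2) ≤ (π * σ l)⁻¹ * 1 :=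
          mul_le_mul_of_nonneg_left h1 (by have := hσ l; positivity)
      _ = (π * σ l)⁻¹ := mul_one _
  have hfcont : ∀ l, Continuous (f l) := by
    intro l
    have : f l = fun a => (π * σ l)⁻¹ * rexp (-(σ l)⁻¹ * ‖a - μ l‖ ^ 2) :=
      funext (hf' l)
    rw [this]; continuity
  have hfAcont : Continuous fA := by
    have : fA = fun a => ∑ l, β l * f l a := funext hfA
    rw [this]
    exact continuous_finset_sum _ fun l _ => continuous_const.mul (hfcont l)
  -- pick an index with positive weight
  obtain ⟨l0, _, hβl0ne⟩ : ∃ l ∈ Finset.univ, β l ≠ 0 :=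
    Finset.exists_ne_zero_of_sum_ne_zero (by rw [hβsum]; norm_num)
  have hβl0 : 0 < β l0 := (hβ l0).lt_of_ne' hβl0ne
  have hfApos : ∀ a, 0 < fA a := by
    intro a
    rw [hfA a]
    have h1 : β l0 * f l0 a ≤ ∑ l, β l * f l a :=
      Finset.single_le_sum (fun l _ => mul_nonneg (hβ l) (hfpos l a).le) (Finset.mem_univ l0)
    have h2 : 0 < β l0 * f l0 a := mul_pos hβl0 (hfpos l0 a)
    linarith
  set C : ℝ := ∑ t, β t * (π * σ t)⁻¹ with hC
  have hCpos : 0 < C := by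
    have h1 : β l0 * (π * σ l0)⁻¹ ≤ C :=
      Finset.single_le_sum (f := fun t => β t * (π * σ t)⁻¹)
        (fun l _ => mul_nonneg (hβ l) (by have := hσ l; positivity)) (Finset.mem_univ l0)
    have h2 : 0 < β l0 * (π * σ l0)⁻¹ :=
      mul_pos hβl0 (by have := hσ l0; positivity)
    linarith
  have hfAle : ∀ a, fA a ≤ C := by
    intro a
    rw [hfA a]
    exact Finset.sum_le_sum fun l _ =>
      mul_le_mul_of_nonneg_left (hfle l a) (hβ l)
  -- integrability of f l
  have hfint : ∀ l, Integrable (f l) := by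
    intro l
    have h := ((gauss_integrable_cx (b := (σ l)⁻¹)
      (by have := hσ l; positivity)).comp_sub_right (μ l)).const_mul (π * σ l)⁻¹
    exact h.congr (Filter.Eventually.of_forall fun a => (hf' l a).symm)
  have hfnorm : ∀ l, ∫ a : ℂ, f l a = 1 := by
    intro l
    have hσl := hσ l
    have h1 : ∫ a : ℂ, f l a
        = (π * σ l)⁻¹ * ∫ a : ℂ, rexp (-(σ l)⁻¹ * ‖a - μ l‖ ^ 2) := by
      rw [← integral_const_mul]
      exact integral_congr_ae (Filter.Eventually.of_forall fun a => hf' l a)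
    rw [h1, integral_sub_right_eq_self (fun a : ℂ => rexp (-(σ l)⁻¹ * ‖a‖ ^ 2)) (μ l),
      gauss_integral_cx (by positivity)]
    field_simp
  -- second moment integrability
  have h2mom : ∀ l, Integrable (fun a : ℂ => f l a * ‖a - μ l0‖ ^ 2) := by
    intro l
    have hσl := hσ l
    have hb : (0:ℝ) < (σ l)⁻¹ := by positivity
    have hI1 : Integrable (fun a : ℂ => ‖a - μ l‖ ^ 2 * rexp (-(σ l)⁻¹ * ‖a - μ l‖ ^ 2)) :=
      (gauss_sq_integrable_cx hb).comp_sub_right (μ l)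
    have hI2 : Integrable (fun a : ℂ => rexp (-(σ l)⁻¹ * ‖a - μ l‖ ^ 2)) :=
      (gauss_integrable_cx hb).comp_sub_right (μ l)
    have hdom : Integrable (fun a : ℂ => (π * σ l)⁻¹ *
        (2 * (‖a - μ l‖ ^ 2 * rexp (-(σ l)⁻¹ * ‖a - μ l‖ ^ 2))
          + 2 * ‖μ l - μ l0‖ ^ 2 * rexp (-(σ l)⁻¹ * ‖a - μ l‖ ^ 2))) :=
      (((hI1.const_mul 2).add ((hI2.const_mul (2 * ‖μ l - μ l0‖ ^ 2)))).const_mul _)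
    refine hdom.mono' ?_ (Filter.Eventually.of_forall fun a => ?_)
    · exact ((hfcont l).mul
        (((continuous_id.sub continuous_const).norm).pow 2)).aestronglyMeasurable
    · have hsq : ‖a - μ l0‖ ^ 2 ≤ 2 * ‖a - μ l‖ ^ 2 + 2 * ‖μ l - μ l0‖ ^ 2 := by
        have htri : ‖a - μ l0‖ ≤ ‖a - μ l‖ + ‖μ l - μ l0‖ := by
          have : a - μ l0 = (a - μ l) + (μ l - μ l0) := by ring
          rw [this]; exact norm_add_le _ _
        nlinarith [mul_self_le_mul_self (norm_nonneg (a - μ l0)) htri,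
          sq_nonneg (‖a - μ l‖ - ‖μ l - μ l0‖), norm_nonneg (a - μ l),
          norm_nonneg (μ l - μ l0)]
      rw [Real.norm_eq_abs, abs_of_nonneg (mul_nonneg (hfpos l a).le (by positivity))]
      rw [hf' l a]
      have hexpnn : (0:ℝ) ≤ rexp (-(σ l)⁻¹ * ‖a - μ l‖ ^ 2) := (Real.exp_pos _).le
      have hc : (0:ℝ) ≤ (π * σ l)⁻¹ := by positivity
      calc (π * σ l)⁻¹ * rexp (-(σ l)⁻¹ * ‖a - μ l‖ ^ 2) * ‖a - μ l0‖ ^ 2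
          ≤ (π * σ l)⁻¹ * rexp (-(σ l)⁻¹ * ‖a - μ l‖ ^ 2)
              * (2 * ‖a - μ l‖ ^ 2 + 2 * ‖μ l - μ l0‖ ^ 2) :=
            mul_le_mul_of_nonneg_left hsq (by positivity)
        _ = (π * σ l)⁻¹ *
            (2 * (‖a - μ l‖ ^ 2 * rexp (-(σ l)⁻¹ * ‖a - μ l‖ ^ 2))
              + 2 * ‖μ l - μ l0‖ ^ 2 * rexp (-(σ l)⁻¹ * ‖a - μ l‖ ^ 2)) := by ring
  -- logarithm bound
  set K : ℝ := |Real.log C| + |Real.log (β l0 * (π * σ l0)⁻¹)| with hK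
  have hlogfA : Continuous fun a => Real.log (fA a) :=
    Continuous.log hfAcont fun a => (hfApos a).ne'
  have hlogbound : ∀ a : ℂ, |Real.log (fA a)| ≤ K + (σ l0)⁻¹ * ‖a - μ l0‖ ^ 2 := by
    intro a
    have hσ0 := hσ l0
    have hmom : (0:ℝ) ≤ (σ l0)⁻¹ * ‖a - μ l0‖ ^ 2 := by positivity
    rw [abs_le]
    constructor
    · -- lower bound
      have hlow : β l0 * (π * σ l0)⁻¹ * rexp (-(σ l0)⁻¹ * ‖a - μ l0‖ ^ 2) ≤ fA a := by
        have h0 : β l0 * f l0 a ≤ fA a := by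
          rw [hfA a]
          exact Finset.single_le_sum (f := fun l => β l * f l a)
            (fun l _ => mul_nonneg (hβ l) (hfpos l a).le) (Finset.mem_univ l0)
        calc β l0 * (π * σ l0)⁻¹ * rexp (-(σ l0)⁻¹ * ‖a - μ l0‖ ^ 2)
            = β l0 * f l0 a := by rw [hf' l0 a]; ring
          _ ≤ fA a := h0
      have h1 : Real.log (β l0 * (π * σ l0)⁻¹ * rexp (-(σ l0)⁻¹ * ‖a - μ l0‖ ^ 2))
          ≤ Real.log (fA a) :=
        Real.log_le_log (by positivity) hlow
      rw [Real.log_mul (by positivity) (Real.exp_ne_zero _), Real.log_exp] at h1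
      have h2 : -|Real.log (β l0 * (π * σ l0)⁻¹)| ≤ Real.log (β l0 * (π * σ l0)⁻¹) :=
        neg_abs_le _
      have h3 : (0:ℝ) ≤ |Real.log C| := abs_nonneg _
      rw [hK]
      linarith
    · -- upper bound
      have h1 : Real.log (fA a) ≤ Real.log C := Real.log_le_log (hfApos a) (hfAle a)
      have h2 : Real.log C ≤ |Real.log C| := le_abs_self _
      have h3 : (0:ℝ) ≤ |Real.log (β l0 * (π * σ l0)⁻¹)| := abs_nonneg _
      rw [hK]; linarith
  -- integrability of f l * log fA
  have hflog : ∀ l, Integrable (fun a : ℂ => f l a * Real.log (fA a)) := by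
    intro l
    have hdom : Integrable (fun a : ℂ => K * f l a + (σ l0)⁻¹ * (f l a * ‖a - μ l0‖ ^ 2)) :=
      ((hfint l).const_mul K).add ((h2mom l).const_mul _)
    refine hdom.mono' ((hfcont l).mul hlogfA).aestronglyMeasurable
      (Filter.Eventually.of_forall fun a => ?_)
    rw [Real.norm_eq_abs, abs_mul, abs_of_nonneg (hfpos l a).le]
    calc f l a * |Real.log (fA a)| ≤ f l a * (K + (σ l0)⁻¹ * ‖a - μ l0‖ ^ 2) :=
        mul_le_mul_of_nonneg_left (hlogbound a) (hfpos l a).le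
      _ = K * f l a + (σ l0)⁻¹ * (f l a * ‖a - μ l0‖ ^ 2) := by ring
  -- integrability of products
  have hff : ∀ l t, Integrable (fun a : ℂ => f l a * f t a) := by
    intro l t
    refine ((hfint l).const_mul (π * σ t)⁻¹).mono'
      ((hfcont l).mul (hfcont t)).aestronglyMeasurable
      (Filter.Eventually.of_forall fun a => ?_)
    rw [Real.norm_eq_abs, abs_of_nonneg (mul_nonneg (hfpos l a).le (hfpos t a).le)]
    calc f l a * f t a ≤ f l a * (π * σ t)⁻¹ :=
        mul_le_mul_of_nonneg_left (hfle t a) (hfpos l a).le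
      _ = (π * σ t)⁻¹ * f l a := mul_comm _ _
  have hffA : ∀ l, Integrable (fun a : ℂ => f l a * fA a) := by
    intro l
    refine ((hfint l).const_mul C).mono'
      ((hfcont l).mul hfAcont).aestronglyMeasurable
      (Filter.Eventually.of_forall fun a => ?_)
    rw [Real.norm_eq_abs, abs_of_nonneg (mul_nonneg (hfpos l a).le (hfApos a).le)]
    calc f l a * fA a ≤ f l a * C :=
        mul_le_mul_of_nonneg_left (hfAle a) (hfpos l a).le
      _ = C * f l a := mul_comm _ _
  -- c l and its properties
  set c : Fin L → ℝ := fun l => ∫ a : ℂ, f l a * fA a with hc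
  have hcpos : ∀ l, 0 < c l := by
    intro l
    rw [hc]
    have := (integral_pos_iff_support_of_nonneg
      (fun a : ℂ => mul_nonneg (hfpos l a).le (hfApos a).le) (hffA l)).2
    apply this
    have hsupp : Function.support (fun a : ℂ => f l a * fA a) = Set.univ := by
      ext a
      simp only [Function.mem_support, Set.mem_univ, iff_true]
      exact (mul_pos (hfpos l a) (hfApos a)).ne'
    rw [hsupp]
    exact isOpen_univ.measure_pos volume Set.univ_nonempty
  have hceq : ∀ l, c l = ∑ t, β t * ∫ a : ℂ, f l a * f t a := by
    intro l
    rw [hc]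
    have h1 : (fun a : ℂ => f l a * fA a)
        = fun a : ℂ => ∑ t, β t * (f l a * f t a) := by
      funext a
      rw [hfA a, Finset.mul_sum]
      congr 1; funext t; ring
    simp only [h1]
    rw [integral_finset_sum _ (fun t _ => (hff l t).const_mul (β t))]
    congr 1; funext t
    rw [integral_const_mul]
  -- Jensen's inequality for each l
  have hJensen : ∀ l, ∫ a : ℂ, f l a * Real.log (fA a) ≤ Real.log (c l) := by
    intro l
    have hcl := hcpos l
    have hpt : ∀ a : ℂ, f l a * Real.log (fA a)
        ≤ (c l)⁻¹ * (f l a * fA a) + (Real.log (c l) - 1) * f l a := by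
      intro a
      have hx := hfApos a
      have hlog : Real.log (fA a) ≤ fA a / c l - 1 + Real.log (c l) := by
        have h1 : Real.log (fA a / c l) ≤ fA a / c l - 1 :=
          Real.log_le_sub_one_of_pos (by positivity)
        rw [Real.log_div hx.ne' hcl.ne'] at h1
        linarith
      calc f l a * Real.log (fA a)
          ≤ f l a * (fA a / c l - 1 + Real.log (c l)) :=
            mul_le_mul_of_nonneg_left hlog (hfpos l a).le
        _ = (c l)⁻¹ * (f l a * fA a) + (Real.log (c l) - 1) * f l a := by
            field_simp; ring
    have hRint : Integrable (fun a : ℂ =>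
        (c l)⁻¹ * (f l a * fA a) + (Real.log (c l) - 1) * f l a) :=
      ((hffA l).const_mul _).add ((hfint l).const_mul _)
    have h2 : ∫ a : ℂ, f l a * Real.log (fA a)
        ≤ ∫ a : ℂ, (c l)⁻¹ * (f l a * fA a) + (Real.log (c l) - 1) * f l a :=
      integral_mono (hflog l) hRint hpt
    have h3 : ∫ a : ℂ, (c l)⁻¹ * (f l a * fA a) + (Real.log (c l) - 1) * f l a
        = Real.log (c l) := by
      rw [integral_add ((hffA l).const_mul _) ((hfint l).const_mul _),
        integral_const_mul, integral_const_mul, hfnorm l]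
      have hcc : (∫ a : ℂ, f l a * fA a) = c l := rfl
      rw [hcc, inv_mul_cancel₀ hcl.ne']
      ring
    linarith [h2, h3.le, h3.ge]
  -- main inequality in terms of natural log
  have hmain : ∫ a : ℂ, fA a * Real.log (fA a) ≤ ∑ l, β l * Real.log (c l) := by
    have h1 : (fun a : ℂ => fA a * Real.log (fA a))
        = fun a : ℂ => ∑ l, β l * (f l a * Real.log (fA a)) := by
      funext a
      rw [hfA a, Finset.sum_mul]
      congr 1; funext l; ring
    rw [h1, integral_finset_sum _ (fun l _ => (hflog l).const_mul (β l))]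
    refine Finset.sum_le_sum fun l _ => ?_
    rw [integral_const_mul]
    exact mul_le_mul_of_nonneg_left (hJensen l) (hβ l)
  -- convert to logb
  rw [ge_iff_le, neg_le_neg_iff]
  have hlog2 : (0:ℝ) < Real.log 2 := Real.log_pos (by norm_num)
  have hL1 : ∫ a : ℂ, fA a * Real.logb 2 (fA a)
      = (∫ a : ℂ, fA a * Real.log (fA a)) * (Real.log 2)⁻¹ := by
    rw [← integral_mul_const]
    congr 1; funext a
    rw [Real.logb, div_eq_mul_inv]; ring
  have hR1 : ∑ l, β l * Real.logb 2 (∑ t, β t * ∫ a : ℂ, f l a * f t a)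
      = (∑ l, β l * Real.log (c l)) * (Real.log 2)⁻¹ := by
    rw [Finset.sum_mul]
    congr 1; funext l
    rw [← hceq l, Real.logb, div_eq_mul_inv]; ring
  rw [hL1, hR1]
  exact mul_le_mul_of_nonneg_right hmain (by positivity)
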